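/- (Sym-Tafel formula, discrete case) Let λ ∈ ℝ, let a_n > 0, κ_n ∈ (0,π) be given sequences, and set ν_{n+1} = 2·arctan(a_nλ/2) and ε_n = a_n/(1 + a_n²λ²/4). For each λ let φ_n(λ) be an SU(2)-valued sequence, differentiable in λ, satisfying φ_{n+1} = φ_n·L_n with L_n = [[e^{−iν_{n+1}/2}·cos(κ_{n+1}/2), −e^{−iν_{n+1}/2}·sin(κ_{n+1}/2)],[e^{iν_{n+1}/2}·sin(κ_{n+1}/2), e^{iν_{n+1}/2}·cos(κ_{n+1}/2)]]. Set S_n = −(∂_λφ_n)·φ_n⁻¹ and γ_n = f⁻¹(S_n). Then γ is a discrete space curve with |γ_{n+1} − γ_n| = ε_n, the angle between consecutive tangent vectors T_{n−1}, T_n equals κ_n, and the angle between consecutive binormal vectors B_{n−1}, B_n equals ν_n; in particular γ has constant torsion λ. -/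

import Mathlib

open Matrix

noncomputable section

/-- Euclidean inner product on ℝ³ (written as `Fin 3 → ℝ`). -/
def dot3 (x y : Fin 3 → ℝ) : ℝ := x 0 * y 0 + x 1 * y 1 + x 2 * y 2

/-- Cross product on ℝ³. -/
def cross3 (x y : Fin 3 → ℝ) : Fin 3 → ℝ :=
  ![x 1 * y 2 - x 2 * y 1, x 2 * y 0 - x 0 * y 2, x 0 * y 1 - x 1 * y 0]

/-- Euclidean norm on ℝ³. -/
def norm3 (x : Fin 3 → ℝ) : ℝ := Real.sqrt (dot3 x x)

/-- Tangent vector T_n = (γ_{n+1} − γ_n)/|γ_{n+1} − γ_n| of a discrete space curve. -/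
def dT (γ : ℤ → Fin 3 → ℝ) (n : ℤ) : Fin 3 → ℝ :=
  (norm3 (γ (n + 1) - γ n))⁻¹ • (γ (n + 1) - γ n)

/-- Binormal vector B_n = (T_{n−1} × T_n)/|T_{n−1} × T_n|. -/
def dB (γ : ℤ → Fin 3 → ℝ) (n : ℤ) : Fin 3 → ℝ :=
  (norm3 (cross3 (dT γ (n - 1)) (dT γ n)))⁻¹ • cross3 (dT γ (n - 1)) (dT γ n)

/-- Principal normal vector N_n = B_n × T_n. -/
def dN (γ : ℤ → Fin 3 → ℝ) (n : ℤ) : Fin 3 → ℝ := cross3 (dB γ n) (dT γ n)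

/-- The matrix L_n of the discrete Frenet–Serret formula, in SU(2) form,
with ν the binormal angle and k the tangent angle κ_{n+1}. -/
def Ldisc (ν k : ℝ) : Matrix (Fin 2) (Fin 2) ℂ :=
  !![Complex.exp (-(Complex.I / 2) * (ν : ℂ)) * ((Real.cos (k / 2) : ℝ) : ℂ),
       -(Complex.exp (-(Complex.I / 2) * (ν : ℂ)) * ((Real.sin (k / 2) : ℝ) : ℂ));
     Complex.exp ((Complex.I / 2) * (ν : ℂ)) * ((Real.sin (k / 2) : ℝ) : ℂ),
       Complex.exp ((Complex.I / 2) * (ν : ℂ)) * ((Real.cos (k / 2) : ℝ) : ℂ)]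

open Complex

def fmat (x : Fin 3 → ℝ) : Matrix (Fin 2) (Fin 2) ℂ :=
  !![(x 0 : ℂ) / 2 * Complex.I, (x 1 : ℂ) / 2 * Complex.I - (x 2 : ℂ) / 2;
     (x 1 : ℂ) / 2 * Complex.I + (x 2 : ℂ) / 2, -((x 0 : ℂ) / 2 * Complex.I)]

def vec3 (M : Matrix (Fin 2) (Fin 2) ℂ) : Fin 3 → ℝ :=
  ![2 * (M 0 0).im, 2 * (M 1 0).im, 2 * (M 1 0).re]

def rot3 (α β : ℂ) (x : Fin 3 → ℝ) : Fin 3 → ℝ :=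
  ![(α.re^2+α.im^2-β.re^2-β.im^2) * x 0 + (2*(α.im*β.im-α.re*β.re)) * x 1 + (2*(α.im*β.re+α.re*β.im)) * x 2,
    (2*(α.im*β.im+α.re*β.re)) * x 0 + (α.re^2-α.im^2-β.re^2+β.im^2) * x 1 + (2*(β.re*β.im-α.re*α.im)) * x 2,
    (2*(α.im*β.re-α.re*β.im)) * x 0 + (2*(β.re*β.im+α.re*α.im)) * x 1 + (α.re^2-α.im^2+β.re^2-β.im^2) * x 2]

def suM (α β : ℂ) : Matrix (Fin 2) (Fin 2) ℂ :=
  !![α, -(starRingEnd ℂ) β; β, (starRingEnd ℂ) α]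

def rotU (U : Matrix (Fin 2) (Fin 2) ℂ) (x : Fin 3 → ℝ) : Fin 3 → ℝ :=
  vec3 (U * fmat x * Uᴴ)

lemma vec3_fmat (x : Fin 3 → ℝ) : vec3 (fmat x) = x := by
  funext i; fin_cases i <;> simp [vec3, fmat] <;> ring

lemma conj_fmat (α β : ℂ) (x : Fin 3 → ℝ) :
    suM α β * fmat x * (suM α β)ᴴ = fmat (rot3 α β x) := by
  ext i j
  fin_cases i <;> fin_cases j <;>
    · simp only [suM, fmat, rot3, Matrix.mul_apply, Fin.sum_univ_two, Matrix.conjTranspose_apply,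
        Matrix.cons_val', Matrix.cons_val_zero, Matrix.cons_val_one, Matrix.head_cons,
        Matrix.head_fin_const, Matrix.empty_val', Matrix.cons_val_fin_one]
      apply Complex.ext <;>
        simp [Complex.add_re, Complex.add_im, Complex.mul_re, Complex.mul_im,
          ← Complex.ofReal_pow] <;> ring

lemma rot3_dot (α β : ℂ) (h : α.re^2+α.im^2+β.re^2+β.im^2 = 1) (x y : Fin 3 → ℝ) :
    dot3 (rot3 α β x) (rot3 α β y) = dot3 x y := by
  set p := α.re; set q := α.im; set r := β.re; set s := β.im
  simp [dot3, rot3]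
  linear_combination (x 0*y 0 + x 1*y 1 + x 2*y 2
    + p^2*(x 0*y 0 + x 1*y 1 + x 2*y 2) + q^2*(x 0*y 0 + x 1*y 1 + x 2*y 2)
    + r^2*(x 0*y 0 + x 1*y 1 + x 2*y 2) + s^2*(x 0*y 0 + x 1*y 1 + x 2*y 2)) * h

lemma rot3_cross (α β : ℂ) (h : α.re^2+α.im^2+β.re^2+β.im^2 = 1) (x y : Fin 3 → ℝ) :
    cross3 (rot3 α β x) (rot3 α β y) = rot3 α β (cross3 x y) := by
  set p := α.re; set q := α.im; set r := β.re; set s := β.im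
  funext i; fin_cases i <;> simp [cross3, rot3]
  · linear_combination (s^2*(x 2*y 1) - s^2*(x 1*y 2) + r^2*(x 2*y 1) - r^2*(x 1*y 2)
      + 2*q*s*(x 2*y 0) - 2*q*s*(x 0*y 2) - 2*q*r*(x 1*y 0) + 2*q*r*(x 0*y 1)
      - q^2*(x 2*y 1) + q^2*(x 1*y 2) - 2*p*s*(x 1*y 0) + 2*p*s*(x 0*y 1)
      - 2*p*r*(x 2*y 0) + 2*p*r*(x 0*y 2) - p^2*(x 2*y 1) + p^2*(x 1*y 2)) * h
  · linear_combination (s^2*(x 2*y 0) - s^2*(x 0*y 2) - 2*r*s*(x 1*y 0) + 2*r*s*(x 0*y 1)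
      - r^2*(x 2*y 0) + r^2*(x 0*y 2) - 2*q*s*(x 2*y 1) + 2*q*s*(x 1*y 2)
      - q^2*(x 2*y 0) + q^2*(x 0*y 2) - 2*p*r*(x 2*y 1) + 2*p*r*(x 1*y 2)
      + 2*p*q*(x 1*y 0) - 2*p*q*(x 0*y 1) + p^2*(x 2*y 0) - p^2*(x 0*y 2)) * h
  · linear_combination (s^2*(x 1*y 0) - s^2*(x 0*y 1) + 2*r*s*(x 2*y 0) - 2*r*s*(x 0*y 2)
      - r^2*(x 1*y 0) + r^2*(x 0*y 1) - 2*q*r*(x 2*y 1) + 2*q*r*(x 1*y 2)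
      + q^2*(x 1*y 0) - q^2*(x 0*y 1) + 2*p*s*(x 2*y 1) - 2*p*s*(x 1*y 2)
      + 2*p*q*(x 2*y 0) - 2*p*q*(x 0*y 2) - p^2*(x 1*y 0) + p^2*(x 0*y 1)) * h

lemma suM_conjTranspose (α β : ℂ) :
    (suM α β)ᴴ = !![(starRingEnd ℂ) α, (starRingEnd ℂ) β; -β, α] := by
  ext i j; fin_cases i <;> fin_cases j <;> simp [suM, Matrix.conjTranspose_apply]

lemma suM_norm_re (α β : ℂ) (h : Complex.normSq α + Complex.normSq β = 1) :
    α.re^2 + α.im^2 + β.re^2 + β.im^2 = 1 := by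
  simp [Complex.normSq_apply] at h; linarith [h]
  
lemma su2_shape {U : Matrix (Fin 2) (Fin 2) ℂ} (hU : Uᴴ * U = 1) (hd : U.det = 1) :
    U = suM (U 0 0) (U 1 0) ∧ (U 0 0).re^2 + (U 0 0).im^2 + (U 1 0).re^2 + (U 1 0).im^2 = 1 := by
  have hinv : U⁻¹ = Uᴴ := Matrix.inv_eq_left_inv hU
  have hadj : U⁻¹ = !![U 1 1, -U 0 1; -U 1 0, U 0 0] := by
    rw [Matrix.inv_def, hd, Matrix.adjugate_fin_two]; simp
  have h2 : Uᴴ = !![U 1 1, -U 0 1; -U 1 0, U 0 0] := by rw [← hinv, hadj]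
  have e11 : U 1 1 = (starRingEnd ℂ) (U 0 0) := by
    have := congrFun (congrFun h2 0) 0; simp [Matrix.conjTranspose_apply] at this
    exact this.symm
  have e01 : U 0 1 = -(starRingEnd ℂ) (U 1 0) := by
    have := congrFun (congrFun h2 0) 1; simp [Matrix.conjTranspose_apply] at this
    rw [this]; ring
  constructor
  · ext i j; fin_cases i <;> fin_cases j <;> simp [suM, e11, e01]
  · have hdet : U 0 0 * U 1 1 - U 0 1 * U 1 0 = 1 := by
      rw [← Matrix.det_fin_two]; exact hd
    rw [e11, e01] at hdet
    have := congrArg Complex.re hdet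
    simp [Complex.mul_re, Complex.conj_re, Complex.conj_im] at this
    nlinarith [this]

lemma rotU_eq (α β : ℂ) (x : Fin 3 → ℝ) : rotU (suM α β) x = rot3 α β x := by
  rw [rotU, conj_fmat, vec3_fmat]

lemma rotU_fmat {U : Matrix (Fin 2) (Fin 2) ℂ} (hU : Uᴴ * U = 1) (hd : U.det = 1)
    (x : Fin 3 → ℝ) : U * fmat x * Uᴴ = fmat (rotU U x) := by
  obtain ⟨hs, -⟩ := su2_shape hU hd
  conv_lhs => rw [hs]
  rw [conj_fmat]
  congr 1
  rw [show rotU U x = rotU (suM (U 0 0) (U 1 0)) x by rw [← hs], rotU_eq]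

lemma rotU_dot {U : Matrix (Fin 2) (Fin 2) ℂ} (hU : Uᴴ * U = 1) (hd : U.det = 1)
    (x y : Fin 3 → ℝ) : dot3 (rotU U x) (rotU U y) = dot3 x y := by
  obtain ⟨hs, hn⟩ := su2_shape hU hd
  rw [show rotU U x = rot3 (U 0 0) (U 1 0) x by rw [hs, rotU_eq]; rw [← hs],
      show rotU U y = rot3 (U 0 0) (U 1 0) y by rw [hs, rotU_eq]; rw [← hs]]
  exact rot3_dot _ _ hn x y

lemma rotU_cross {U : Matrix (Fin 2) (Fin 2) ℂ} (hU : Uᴴ * U = 1) (hd : U.det = 1)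
    (x y : Fin 3 → ℝ) : cross3 (rotU U x) (rotU U y) = rotU U (cross3 x y) := by
  obtain ⟨hs, hn⟩ := su2_shape hU hd
  have e : ∀ z, rotU U z = rot3 (U 0 0) (U 1 0) z := by
    intro z; rw [hs, rotU_eq]; rw [← hs]
  rw [e, e, e]; exact rot3_cross _ _ hn x y

lemma rotU_mul {U V : Matrix (Fin 2) (Fin 2) ℂ} (hV : Vᴴ * V = 1) (hd : V.det = 1)
    (x : Fin 3 → ℝ) : rotU (U * V) x = rotU U (rotU V x) := by
  show vec3 (U * V * fmat x * (U * V)ᴴ) = rotU U (rotU V x)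
  rw [Matrix.conjTranspose_mul,
    show U * V * fmat x * (Vᴴ * Uᴴ) = U * (V * fmat x * Vᴴ) * Uᴴ from by noncomm_ring,
    rotU_fmat hV hd x]
  rfl

lemma fmat_smul (c : ℝ) (x : Fin 3 → ℝ) : fmat (c • x) = (c : ℂ) • fmat x := by
  ext i j; fin_cases i <;> fin_cases j <;> simp [fmat] <;> push_cast <;> ring

lemma vec3_csmul (c : ℝ) (M : Matrix (Fin 2) (Fin 2) ℂ) :
    vec3 ((c : ℂ) • M) = c • vec3 M := by
  funext i; fin_cases i <;>
    simp [vec3, Matrix.smul_apply, smul_eq_mul, Complex.mul_im, Complex.mul_re,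
      Pi.smul_apply] <;> ring

lemma rotU_smul (U : Matrix (Fin 2) (Fin 2) ℂ) (c : ℝ) (x : Fin 3 → ℝ) :
    rotU U (c • x) = c • rotU U x := by
  unfold rotU
  rw [fmat_smul, Matrix.mul_smul, Matrix.smul_mul, vec3_csmul]

lemma suM_unitary (α β : ℂ) (h : Complex.normSq α + Complex.normSq β = 1) :
    (suM α β)ᴴ * suM α β = 1 ∧ suM α β * (suM α β)ᴴ = 1 ∧ (suM α β).det = 1 := by
  have hn := suM_norm_re α β h
  refine ⟨?_, ?_, ?_⟩
  · ext i j; fin_cases i <;> fin_cases j <;>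
      · simp [suM, Matrix.mul_apply, Fin.sum_univ_two, Matrix.conjTranspose_apply,
          Matrix.one_apply]
        apply Complex.ext <;>
          simp [Complex.add_re, Complex.add_im, Complex.mul_re, Complex.mul_im] <;>
          first
          | linear_combination hn
          | linear_combination -hn
          | ring
  · ext i j; fin_cases i <;> fin_cases j <;>
      · simp [suM, Matrix.mul_apply, Fin.sum_univ_two, Matrix.conjTranspose_apply,
          Matrix.one_apply]
        apply Complex.ext <;>
          simp [Complex.add_re, Complex.add_im, Complex.mul_re, Complex.mul_im] <;>
          first
          | linear_combination hn
          | linear_combination -hn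
          | ring
  · rw [Matrix.det_fin_two]
    simp [suM]
    apply Complex.ext <;>
      simp [Complex.add_re, Complex.add_im, Complex.mul_re, Complex.mul_im] <;>
      first
      | linear_combination hn
      | linear_combination -hn
      | ring

def Lα (ν k : ℝ) : ℂ := Complex.exp (-(Complex.I / 2) * (ν : ℂ)) * ((Real.cos (k / 2) : ℝ) : ℂ)
def Lβ (ν k : ℝ) : ℂ := Complex.exp ((Complex.I / 2) * (ν : ℂ)) * ((Real.sin (k / 2) : ℝ) : ℂ)

lemma exp_neg_half (ν : ℝ) : Complex.exp (-(Complex.I / 2) * (ν : ℂ)) =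
    ((Real.cos (ν/2) : ℝ) : ℂ) - ((Real.sin (ν/2) : ℝ) : ℂ) * Complex.I := by
  rw [show -(Complex.I / 2) * (ν : ℂ) = ((-(ν/2) : ℝ) : ℂ) * Complex.I by push_cast; ring,
    Complex.exp_mul_I, ← Complex.ofReal_cos, ← Complex.ofReal_sin,
    Real.cos_neg, Real.sin_neg]
  push_cast; ring

lemma exp_pos_half (ν : ℝ) : Complex.exp ((Complex.I / 2) * (ν : ℂ)) =
    ((Real.cos (ν/2) : ℝ) : ℂ) + ((Real.sin (ν/2) : ℝ) : ℂ) * Complex.I := by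
  rw [show (Complex.I / 2) * (ν : ℂ) = (((ν/2) : ℝ) : ℂ) * Complex.I by push_cast; ring,
    Complex.exp_mul_I, ← Complex.ofReal_cos, ← Complex.ofReal_sin]

lemma Lα_re (ν k : ℝ) : (Lα ν k).re = Real.cos (ν/2) * Real.cos (k/2) := by
  rw [Lα, exp_neg_half]
  simp [Complex.sub_re, Complex.mul_re, -Complex.ofReal_cos, -Complex.ofReal_sin]
lemma Lα_im (ν k : ℝ) : (Lα ν k).im = -(Real.sin (ν/2) * Real.cos (k/2)) := by
  rw [Lα, exp_neg_half]
  simp [Complex.sub_im, Complex.mul_im, -Complex.ofReal_cos, -Complex.ofReal_sin]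
lemma Lβ_re (ν k : ℝ) : (Lβ ν k).re = Real.cos (ν/2) * Real.sin (k/2) := by
  rw [Lβ, exp_pos_half]
  simp [Complex.add_re, Complex.mul_re, -Complex.ofReal_cos, -Complex.ofReal_sin]
lemma Lβ_im (ν k : ℝ) : (Lβ ν k).im = Real.sin (ν/2) * Real.sin (k/2) := by
  rw [Lβ, exp_pos_half]
  simp [Complex.add_im, Complex.mul_im, -Complex.ofReal_cos, -Complex.ofReal_sin]

lemma Ldisc_eq (ν k : ℝ) : Ldisc ν k = suM (Lα ν k) (Lβ ν k) := by
  have hc : (starRingEnd ℂ) (Lβ ν k) = Complex.exp (-(Complex.I / 2) * (ν : ℂ)) * ((Real.sin (k / 2) : ℝ) : ℂ) := by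
    rw [Lβ, exp_neg_half, exp_pos_half]
    apply Complex.ext <;>
      simp [Complex.add_re, Complex.add_im, Complex.sub_re, Complex.sub_im, Complex.mul_re,
        Complex.mul_im, -Complex.ofReal_cos, -Complex.ofReal_sin]
  have hc2 : (starRingEnd ℂ) (Lα ν k) = Complex.exp ((Complex.I / 2) * (ν : ℂ)) * ((Real.cos (k / 2) : ℝ) : ℂ) := by
    rw [Lα, exp_neg_half, exp_pos_half]
    apply Complex.ext <;>
      simp [Complex.add_re, Complex.add_im, Complex.sub_re, Complex.sub_im, Complex.mul_re,
        Complex.mul_im, -Complex.ofReal_cos, -Complex.ofReal_sin]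
  rw [suM, hc, hc2]; rfl

lemma Ldisc_norm (ν k : ℝ) :
    Complex.normSq (Lα ν k) + Complex.normSq (Lβ ν k) = 1 := by
  simp only [Complex.normSq_apply, Lα_re, Lα_im, Lβ_re, Lβ_im]
  have pk := Real.sin_sq_add_cos_sq (k/2)
  have pv := Real.sin_sq_add_cos_sq (ν/2)
  nlinarith [pk, pv]

lemma Ldisc_unitary (ν k : ℝ) : (Ldisc ν k)ᴴ * Ldisc ν k = 1 := by
  rw [Ldisc_eq]; exact (suM_unitary _ _ (Ldisc_norm ν k)).1
lemma Ldisc_unitary' (ν k : ℝ) : Ldisc ν k * (Ldisc ν k)ᴴ = 1 := by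
  rw [Ldisc_eq]; exact (suM_unitary _ _ (Ldisc_norm ν k)).2.1
lemma Ldisc_det (ν k : ℝ) : (Ldisc ν k).det = 1 := by
  rw [Ldisc_eq]; exact (suM_unitary _ _ (Ldisc_norm ν k)).2.2

lemma rotL_apply (ν k : ℝ) (x : Fin 3 → ℝ) :
    rotU (Ldisc ν k) x =
      ![Real.cos k * x 0 - Real.sin k * x 1,
        Real.sin k * Real.cos ν * x 0 + Real.cos k * Real.cos ν * x 1 + Real.sin ν * x 2,
        -(Real.sin k * Real.sin ν) * x 0 - Real.cos k * Real.sin ν * x 1 + Real.cos ν * x 2] := by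
  rw [Ldisc_eq, rotU_eq]
  have hck := Real.cos_two_mul (k/2); rw [show 2*(k/2) = k by ring] at hck
  have hsk := Real.sin_two_mul (k/2); rw [show 2*(k/2) = k by ring] at hsk
  have hcv := Real.cos_two_mul (ν/2); rw [show 2*(ν/2) = ν by ring] at hcv
  have hsv := Real.sin_two_mul (ν/2); rw [show 2*(ν/2) = ν by ring] at hsv
  have pk := Real.sin_sq_add_cos_sq (k/2)
  have pv := Real.sin_sq_add_cos_sq (ν/2)
  funext i; fin_cases i <;>
    simp [rot3, Lα_re, Lα_im, Lβ_re, Lβ_im] <;>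
    simp only [hck, hsk, hcv, hsv]
  · linear_combination ((Real.cos (k/2)^2 - Real.sin (k/2)^2) * x 0
      - 2*Real.cos (k/2)*Real.sin (k/2)*x 1) * pv - x 0 * pk
  · linear_combination (-2*Real.cos (k/2)*Real.sin (k/2)*x 0 - (2*Real.cos (k/2)^2-1)*x 1) * pv
      + (-(Real.cos (ν/2)^2-Real.sin (ν/2)^2)*x 1 + 2*Real.sin (ν/2)*Real.cos (ν/2)*x 2) * pk
  · linear_combination (2*Real.sin (ν/2)*Real.cos (ν/2)*x 1
      + (Real.cos (ν/2)^2-Real.sin (ν/2)^2)*x 2) * pk - x 2 * pv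


lemma hasDerivAt_nu (b l : ℝ) :
    HasDerivAt (fun u => 2 * Real.arctan (b * u / 2)) (b / (1 + b^2 * l^2 / 4)) l := by
  have h1 : HasDerivAt (fun u : ℝ => b * u / 2) (b / 2) l := by
    simpa using ((hasDerivAt_id l).const_mul b).div_const 2
  have h2 := (Real.hasDerivAt_arctan (b * l / 2)).comp l h1
  have h3 := h2.const_mul 2
  refine h3.congr_deriv ?_
  have hpos : (0:ℝ) < 1 + (b * l / 2)^2 := by positivity
  have hpos2 : (0:ℝ) < 1 + b^2 * l^2 / 4 := by positivity
  field_simp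
  ring

lemma hasDerivAt_exp_nu (c : ℂ) (b l : ℝ) :
    HasDerivAt (fun u : ℝ => Complex.exp (c * ((2 * Real.arctan (b * u / 2) : ℝ) : ℂ)))
      (Complex.exp (c * ((2 * Real.arctan (b * l / 2) : ℝ) : ℂ)) *
        (c * ((b / (1 + b^2 * l^2 / 4) : ℝ) : ℂ))) l := by
  have h := ((hasDerivAt_nu b l).ofReal_comp).const_mul c
  exact h.cexp

lemma hasDerivAt_Ldisc_entry (b k l : ℝ) (i j : Fin 2) :
    HasDerivAt (fun u => Ldisc (2 * Real.arctan (b * u / 2)) k i j)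
      ((((b / (1 + b^2 * l^2 / 4) : ℝ) : ℂ) •
        (!![-(Complex.I/2), 0; 0, Complex.I/2] * Ldisc (2 * Real.arctan (b * l / 2)) k)) i j) l := by
  have e1 := hasDerivAt_exp_nu (-(Complex.I/2)) b l
  have e2 := hasDerivAt_exp_nu (Complex.I/2) b l
  fin_cases i <;> fin_cases j
  · have := e1.mul_const ((Real.cos (k/2) : ℝ) : ℂ)
    refine this.congr_deriv ?_
    simp [Ldisc, Matrix.smul_apply, Matrix.mul_apply, Fin.sum_univ_two, smul_eq_mul]
    try ring
  · have := (e1.mul_const ((Real.sin (k/2) : ℝ) : ℂ)).neg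
    refine this.congr_deriv ?_
    simp [Ldisc, Matrix.smul_apply, Matrix.mul_apply, Fin.sum_univ_two, smul_eq_mul]
    try ring
  · have := e2.mul_const ((Real.sin (k/2) : ℝ) : ℂ)
    refine this.congr_deriv ?_
    simp [Ldisc, Matrix.smul_apply, Matrix.mul_apply, Fin.sum_univ_two, smul_eq_mul]
    try ring
  · have := e2.mul_const ((Real.cos (k/2) : ℝ) : ℂ)
    refine this.congr_deriv ?_
    simp [Ldisc, Matrix.smul_apply, Matrix.mul_apply, Fin.sum_univ_two, smul_eq_mul]
    try ring

lemma fmat_e1 : fmat ![1, 0, 0] = !![Complex.I/2, 0; 0, -(Complex.I/2)] := by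
  ext i j; fin_cases i <;> fin_cases j <;> simp [fmat] <;> ring

lemma cross3_smul_left (c : ℝ) (x y : Fin 3 → ℝ) : cross3 (c • x) y = c • cross3 x y := by
  funext i; fin_cases i <;> simp [cross3] <;> ring
lemma cross3_smul_right (c : ℝ) (x y : Fin 3 → ℝ) : cross3 x (c • y) = c • cross3 x y := by
  funext i; fin_cases i <;> simp [cross3] <;> ring
lemma cross3_self (x : Fin 3 → ℝ) : cross3 x x = 0 := by
  funext i; fin_cases i <;> simp [cross3] <;> ring

lemma norm3_smul {c : ℝ} (hc : 0 ≤ c) (v : Fin 3 → ℝ) : norm3 (c • v) = c * norm3 v := by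
  unfold norm3 dot3
  simp only [Pi.smul_apply, smul_eq_mul]
  rw [show c * v 0 * (c * v 0) + c * v 1 * (c * v 1) + c * v 2 * (c * v 2)
      = c^2 * (v 0 * v 0 + v 1 * v 1 + v 2 * v 2) by ring,
    Real.sqrt_mul (sq_nonneg c), Real.sqrt_sq hc]

lemma norm3_one_of {v : Fin 3 → ℝ} (h : dot3 v v = 1) : norm3 v = 1 := by
  rw [norm3, h, Real.sqrt_one]

lemma norm3_zero : norm3 0 = 0 := by simp [norm3, dot3]

lemma sin_two_arctan (x : ℝ) : Real.sin (2 * Real.arctan x) = 2 * x / (1 + x^2) := by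
  rw [Real.sin_two_mul, Real.sin_arctan, Real.cos_arctan]
  have h : (0:ℝ) < 1 + x^2 := by positivity
  have hs : Real.sqrt (1 + x^2) * Real.sqrt (1 + x^2) = 1 + x^2 :=
    Real.mul_self_sqrt (le_of_lt h)
  have hs0 : Real.sqrt (1 + x^2) ≠ 0 := by positivity
  rw [show 2 * (x / Real.sqrt (1 + x^2)) * (1 / Real.sqrt (1 + x^2))
      = 2 * x / (Real.sqrt (1 + x^2) * Real.sqrt (1 + x^2)) from by field_simp, hs]

lemma Sstep_alg (c : ℂ) (A B L D : Matrix (Fin 2) (Fin 2) ℂ) (hL : L * Lᴴ = 1) :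
    -((A * L + c • (B * (D * L))) * (Lᴴ * Bᴴ)) = -(A * Bᴴ) + c • (B * (-D) * Bᴴ) := by
  have h1 : A * L * (Lᴴ * Bᴴ) = A * Bᴴ := by
    have h : A * L * (Lᴴ * Bᴴ) = A * (L * Lᴴ) * Bᴴ := by noncomm_ring
    rw [h, hL, Matrix.mul_one]
  have h2 : B * (D * L) * (Lᴴ * Bᴴ) = B * D * Bᴴ := by
    have h : B * (D * L) * (Lᴴ * Bᴴ) = B * D * (L * Lᴴ) * Bᴴ := by noncomm_ring
    rw [h, hL, Matrix.mul_one]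
  rw [Matrix.add_mul, Matrix.smul_mul, h1, h2, neg_add, ← smul_neg]
  congr 2
  noncomm_ring

lemma vec3_step (M : Matrix (Fin 2) (Fin 2) ℂ) (c : ℝ) (t : Fin 3 → ℝ) :
    vec3 (M + (c : ℂ) • fmat t) - vec3 M = c • t := by
  funext i
  fin_cases i <;>
    simp [vec3, fmat, Matrix.add_apply, Matrix.smul_apply, smul_eq_mul,
      Complex.add_im, Complex.add_re, Complex.mul_im, Complex.mul_re] <;> ring

lemma cross_wv_tL (k ν : ℝ) :
    cross3 ![0, Real.sin ν, Real.cos ν]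
      ![Real.cos k, Real.sin k * Real.cos ν, -(Real.sin k * Real.sin ν)]
    = ![-(Real.sin k), Real.cos k * Real.cos ν, -(Real.cos k * Real.sin ν)] := by
  have pv := Real.sin_sq_add_cos_sq ν
  funext i
  fin_cases i <;> simp [cross3] <;>
    first
    | ring1
    | linear_combination (-(Real.sin k)) * pv
    | linear_combination (Real.sin k) * pv

lemma neg_DM : -(!![-(Complex.I/2), 0; 0, Complex.I/2]) = fmat ![1, 0, 0] := by
  rw [fmat_e1]; ext i j; fin_cases i <;> fin_cases j <;> simp


/-- (Sym–Tafel formula, discrete case.)  Given λ, a_n > 0, κ_n ∈ (0,π), with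
ν_{n+1} = 2 arctan(a_nλ/2) and ε_n = a_n/(1+a_n²λ²/4), and an SU(2)-valued
solution φ_n(λ) of the discrete linear problem, the curve γ_n = f⁻¹(−(∂_λφ_n)φ_n⁻¹)
is a discrete space curve with |γ_{n+1} − γ_n| = ε_n, tangent angles κ_n and
binormal angles ν_n; in particular γ has constant torsion λ. -/
theorem statement8 (lam : ℝ) (a κ : ℤ → ℝ)
    (ha : ∀ n, 0 < a n) (hκ : ∀ n, κ n ∈ Set.Ioo 0 Real.pi)
    (φ φl : ℝ → ℤ → Matrix (Fin 2) (Fin 2) ℂ)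
    (hsu : ∀ l n, (φ l n)ᴴ * φ l n = 1 ∧ (φ l n).det = 1)
    (hrec : ∀ l n, φ l (n + 1) = φ l n * Ldisc (2 * Real.arctan (a n * l / 2)) (κ (n + 1)))
    (hl : ∀ l n, ∀ i j, HasDerivAt (fun u => φ u n i j) (φl l n i j) l)
    (S : ℤ → Matrix (Fin 2) (Fin 2) ℂ)
    (hS : ∀ n, S n = -(φl lam n * (φ lam n)⁻¹))
    (γ : ℤ → Fin 3 → ℝ)
    (hγ : ∀ n, γ n = ![2 * (S n 0 0).im, 2 * (S n 1 0).im, 2 * (S n 1 0).re]) :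
    (∀ n, ¬ Collinear ℝ ({γ (n - 1), γ n, γ (n + 1)} : Set (Fin 3 → ℝ))) ∧
    (∀ n, norm3 (γ (n + 1) - γ n) = a n / (1 + (a n) ^ 2 * lam ^ 2 / 4)) ∧
    (∀ n, dot3 (dT γ n) (dT γ (n - 1)) = Real.cos (κ n)) ∧
    (∀ n, dot3 (dB γ n) (dB γ (n - 1)) = Real.cos (2 * Real.arctan (a (n - 1) * lam / 2)) ∧
          dot3 (dB γ n) (dN γ (n - 1)) = Real.sin (2 * Real.arctan (a (n - 1) * lam / 2))) ∧
    (∀ n, Real.sin (2 * Real.arctan (a n * lam / 2)) / norm3 (γ (n + 1) - γ n) = lam) := by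

  have hU : ∀ n, (φ lam n)ᴴ * φ lam n = 1 := fun n => (hsu lam n).1
  have hd : ∀ n, (φ lam n).det = 1 := fun n => (hsu lam n).2
  have hinv : ∀ n, (φ lam n)⁻¹ = (φ lam n)ᴴ := fun n => Matrix.inv_eq_left_inv (hU n)
  have hepspos : ∀ n, 0 < a n / (1 + (a n)^2 * lam^2 / 4) :=
    fun n => div_pos (ha n) (by positivity)
  have hm : ∀ n : ℤ, n - 1 + 1 = n := fun n => sub_add_cancel n 1
  have hsinpos : ∀ n, 0 < Real.sin (κ n) :=
    fun n => Real.sin_pos_of_pos_of_lt_pi (hκ n).1 (hκ n).2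
  -- step for φl
  have hstep : ∀ n, φl lam (n+1) = φl lam n * Ldisc (2*Real.arctan (a n*lam/2)) (κ (n+1))
      + ((a n / (1 + (a n)^2*lam^2/4) : ℝ) : ℂ) •
        (φ lam n * (!![-(Complex.I/2), 0; 0, Complex.I/2]
          * Ldisc (2*Real.arctan (a n*lam/2)) (κ (n+1)))) := by
    intro n
    ext i j
    have d0 := (hl lam n i 0).mul (hasDerivAt_Ldisc_entry (a n) (κ (n+1)) lam 0 j)
    have d1 := (hl lam n i 1).mul (hasDerivAt_Ldisc_entry (a n) (κ (n+1)) lam 1 j)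
    have hev : (fun u => φ u (n+1) i j) =ᶠ[nhds lam]
        (fun u => φ u n i 0 * Ldisc (2*Real.arctan (a n*u/2)) (κ (n+1)) 0 j
          + φ u n i 1 * Ldisc (2*Real.arctan (a n*u/2)) (κ (n+1)) 1 j) :=
      Filter.Eventually.of_forall (fun u => by
        simp only [hrec u n, Matrix.mul_apply, Fin.sum_univ_two])
    have dsum := (d0.add d1).congr_of_eventuallyEq hev
    have huni := (hl lam (n+1) i j).unique dsum
    rw [huni]
    simp [Matrix.add_apply, Matrix.mul_apply, Matrix.smul_apply, Fin.sum_univ_two, smul_eq_mul]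
    ring
  -- step for S
  have hSd : ∀ n, S (n+1) = S n + ((a n / (1 + (a n)^2*lam^2/4) : ℝ) : ℂ) •
      fmat (rotU (φ lam n) ![1, 0, 0]) := by
    intro n
    have hLL := Ldisc_unitary' (2*Real.arctan (a n*lam/2)) (κ (n+1))
    have key := Sstep_alg ((a n / (1 + (a n)^2*lam^2/4) : ℝ) : ℂ) (φl lam n) (φ lam n)
      (Ldisc (2*Real.arctan (a n*lam/2)) (κ (n+1))) (!![-(Complex.I/2), 0; 0, Complex.I/2]) hLL
    rw [hS (n+1), hinv (n+1), hrec lam n, Matrix.conjTranspose_mul, hstep n, key, hS n, hinv n]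
    congr 1
    rw [neg_DM, rotU_fmat (hU n) (hd n)]
  -- difference of γ
  have hgd : ∀ n, γ (n+1) - γ n
      = (a n / (1 + (a n)^2*lam^2/4)) • rotU (φ lam n) ![1, 0, 0] := by
    intro n
    have h1 : γ (n+1) = vec3 (S (n+1)) := by rw [hγ (n+1)]; rfl
    have h2 : γ n = vec3 (S n) := by rw [hγ n]; rfl
    rw [h1, h2, hSd n, vec3_step]
  have htv1 : ∀ n, norm3 (rotU (φ lam n) ![1, 0, 0]) = 1 := by
    intro n
    apply norm3_one_of
    rw [rotU_dot (hU n) (hd n)]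
    simp [dot3]
  have claim2 : ∀ n, norm3 (γ (n + 1) - γ n) = a n / (1 + (a n)^2 * lam^2 / 4) := by
    intro n
    rw [hgd n, norm3_smul (le_of_lt (hepspos n)), htv1, mul_one]
  have hdT : ∀ n, dT γ n = rotU (φ lam n) ![1, 0, 0] := by
    intro n
    rw [dT, hgd n, norm3_smul (le_of_lt (hepspos n)), htv1, mul_one, smul_smul,
      inv_mul_cancel₀ (ne_of_gt (hepspos n)), one_smul]
  have hφsucc : ∀ n, φ lam n = φ lam (n-1) * Ldisc (2*Real.arctan (a (n-1)*lam/2)) (κ n) := by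
    intro n
    have := hrec lam (n-1)
    rw [hm n] at this
    exact this
  have hdT2 : ∀ n, rotU (φ lam n) ![1, 0, 0]
      = rotU (φ lam (n-1)) ![Real.cos (κ n),
          Real.sin (κ n) * Real.cos (2*Real.arctan (a (n-1)*lam/2)),
          -(Real.sin (κ n) * Real.sin (2*Real.arctan (a (n-1)*lam/2)))] := by
    intro n
    rw [hφsucc n, rotU_mul (Ldisc_unitary _ _) (Ldisc_det _ _), rotL_apply]
    congr 1
    funext i; fin_cases i <;> simp
  have hcrossdT : ∀ n, cross3 (dT γ (n-1)) (dT γ n)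
      = Real.sin (κ n) • rotU (φ lam (n-1)) ![0, Real.sin (2*Real.arctan (a (n-1)*lam/2)),
          Real.cos (2*Real.arctan (a (n-1)*lam/2))] := by
    intro n
    rw [hdT (n-1), hdT n, hdT2 n, rotU_cross (hU (n-1)) (hd (n-1)), ← rotU_smul]
    congr 1
    funext i; fin_cases i <;> simp [cross3] <;> ring
  have hnbv : ∀ n, norm3 (rotU (φ lam (n-1)) ![0, Real.sin (2*Real.arctan (a (n-1)*lam/2)),
      Real.cos (2*Real.arctan (a (n-1)*lam/2))]) = 1 := by
    intro n
    apply norm3_one_of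
    rw [rotU_dot (hU (n-1)) (hd (n-1))]
    simp [dot3]
    linear_combination Real.sin_sq_add_cos_sq (2*Real.arctan (a (n-1)*lam/2))
  have hdB : ∀ n, dB γ n = rotU (φ lam (n-1)) ![0, Real.sin (2*Real.arctan (a (n-1)*lam/2)),
      Real.cos (2*Real.arctan (a (n-1)*lam/2))] := by
    intro n
    rw [dB, hcrossdT n, norm3_smul (le_of_lt (hsinpos n)), hnbv n, mul_one, smul_smul,
      inv_mul_cancel₀ (ne_of_gt (hsinpos n)), one_smul]
  have hdN : ∀ n, dN γ n = rotU (φ lam (n-1)) ![-(Real.sin (κ n)),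
      Real.cos (κ n) * Real.cos (2*Real.arctan (a (n-1)*lam/2)),
      -(Real.cos (κ n) * Real.sin (2*Real.arctan (a (n-1)*lam/2)))] := by
    intro n
    rw [dN, hdB n, hdT n, hdT2 n, rotU_cross (hU (n-1)) (hd (n-1)),
      cross_wv_tL (κ n) (2*Real.arctan (a (n-1)*lam/2))]
  have claim3 : ∀ n, dot3 (dT γ n) (dT γ (n-1)) = Real.cos (κ n) := by
    intro n
    rw [hdT n, hdT2 n, hdT (n-1), rotU_dot (hU (n-1)) (hd (n-1))]
    simp [dot3]
  have claim4 : ∀ n, dot3 (dB γ n) (dB γ (n - 1)) = Real.cos (2 * Real.arctan (a (n - 1) * lam / 2)) ∧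
      dot3 (dB γ n) (dN γ (n - 1)) = Real.sin (2 * Real.arctan (a (n - 1) * lam / 2)) := by
    intro n
    have hsub : n - 1 - 1 = n - 2 := by ring
    have hφs : φ lam (n-1) = φ lam (n-2) * Ldisc (2*Real.arctan (a (n-2)*lam/2)) (κ (n-1)) := by
      have := hφsucc (n-1); rw [hsub] at this; exact this
    have hBn : dB γ n = rotU (φ lam (n-2))
        (rotU (Ldisc (2*Real.arctan (a (n-2)*lam/2)) (κ (n-1)))
          ![0, Real.sin (2*Real.arctan (a (n-1)*lam/2)),
            Real.cos (2*Real.arctan (a (n-1)*lam/2))]) := by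
      rw [hdB n, hφs, rotU_mul (Ldisc_unitary _ _) (Ldisc_det _ _)]
    have hBm : dB γ (n-1) = rotU (φ lam (n-2)) ![0, Real.sin (2*Real.arctan (a (n-2)*lam/2)),
        Real.cos (2*Real.arctan (a (n-2)*lam/2))] := by
      rw [hdB (n-1), hsub]
    have hNm : dN γ (n-1) = rotU (φ lam (n-2)) ![-(Real.sin (κ (n-1))),
        Real.cos (κ (n-1)) * Real.cos (2*Real.arctan (a (n-2)*lam/2)),
        -(Real.cos (κ (n-1)) * Real.sin (2*Real.arctan (a (n-2)*lam/2)))] := by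
      rw [hdN (n-1), hsub]
    constructor
    · rw [hBn, hBm, rotU_dot (hU (n-2)) (hd (n-2)), rotL_apply]
      simp [dot3]
      linear_combination Real.cos (2*Real.arctan (a (n-1)*lam/2))
        * Real.sin_sq_add_cos_sq (2*Real.arctan (a (n-2)*lam/2))
    · rw [hBn, hNm, rotU_dot (hU (n-2)) (hd (n-2)), rotL_apply]
      simp [dot3]
      linear_combination Real.sin (2*Real.arctan (a (n-1)*lam/2)) * Real.sin_sq_add_cos_sq (κ (n-1))
        + Real.sin (2*Real.arctan (a (n-1)*lam/2)) * Real.cos (κ (n-1))^2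
          * Real.sin_sq_add_cos_sq (2*Real.arctan (a (n-2)*lam/2))
  have claim5 : ∀ n, Real.sin (2 * Real.arctan (a n * lam / 2)) / norm3 (γ (n + 1) - γ n) = lam := by
    intro n
    rw [claim2 n, sin_two_arctan]
    have h1 : (0:ℝ) < 1 + (a n * lam / 2)^2 := by positivity
    have h2 : (0:ℝ) < 1 + (a n)^2 * lam^2 / 4 := by positivity
    have h3 : a n ≠ 0 := ne_of_gt (ha n)
    field_simp
    ring
  have claim1 : ∀ n, ¬ Collinear ℝ ({γ (n - 1), γ n, γ (n + 1)} : Set (Fin 3 → ℝ)) := by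
    intro n hc
    have hmem : γ (n-1) ∈ ({γ (n - 1), γ n, γ (n + 1)} : Set (Fin 3 → ℝ)) := by simp
    obtain ⟨v, hv⟩ := (collinear_iff_of_mem hmem).mp hc
    obtain ⟨r1, hr1⟩ := hv (γ n) (by simp)
    obtain ⟨r2, hr2⟩ := hv (γ (n+1)) (by simp)
    have e1 : γ n - γ (n-1) = r1 • v := by
      rw [hr1]; funext i; simp
    have e2 : γ (n+1) - γ n = (r2 - r1) • v := by
      rw [hr1, hr2]; funext i; simp [sub_smul]; ring
    have hz : cross3 (γ n - γ (n-1)) (γ (n+1) - γ n) = 0 := by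
      rw [e1, e2, cross3_smul_left, cross3_smul_right, cross3_self]; simp
    have hgd' : γ n - γ (n-1) = (a (n-1) / (1 + (a (n-1))^2*lam^2/4)) • rotU (φ lam (n-1)) ![1,0,0] := by
      have := hgd (n-1); rw [hm n] at this; exact this
    have hne : cross3 (γ n - γ (n-1)) (γ (n+1) - γ n)
        = ((a (n-1) / (1 + (a (n-1))^2*lam^2/4)) * (a n / (1 + (a n)^2*lam^2/4)) * Real.sin (κ n))
          • rotU (φ lam (n-1)) ![0, Real.sin (2*Real.arctan (a (n-1)*lam/2)),
              Real.cos (2*Real.arctan (a (n-1)*lam/2))] := by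
      rw [hgd', hgd n, cross3_smul_left, cross3_smul_right]
      rw [show cross3 (rotU (φ lam (n-1)) ![1,0,0]) (rotU (φ lam n) ![1,0,0])
          = Real.sin (κ n) • rotU (φ lam (n-1)) ![0, Real.sin (2*Real.arctan (a (n-1)*lam/2)),
              Real.cos (2*Real.arctan (a (n-1)*lam/2))] from by
        rw [← hdT (n-1), ← hdT n]; exact hcrossdT n]
      rw [smul_smul, smul_smul]
    have hpos : 0 < (a (n-1) / (1 + (a (n-1))^2*lam^2/4)) * (a n / (1 + (a n)^2*lam^2/4)) * Real.sin (κ n) := by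
      have := hepspos (n-1); have := hepspos n; have := hsinpos n
      positivity
    have hcontra : norm3 (cross3 (γ n - γ (n-1)) (γ (n+1) - γ n))
        = (a (n-1) / (1 + (a (n-1))^2*lam^2/4)) * (a n / (1 + (a n)^2*lam^2/4)) * Real.sin (κ n) := by
      rw [hne, norm3_smul (le_of_lt hpos), hnbv n, mul_one]
    rw [hz, norm3_zero] at hcontra
    exact absurd hcontra.symm (ne_of_gt hpos)
  exact ⟨claim1, claim2, claim3, claim4, claim5⟩
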